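/- There is an instance of Seat Arrangement with binary and symmetric preferences that has no envy-free arrangement: for the three agents x, y, z with f_p(q) = 1 for all distinct p, q ∈ {x, y, z}, and the seat graph being a path on 3 vertices, no arrangement is envy-free. -/

import Mathlib

open scoped Classical

noncomputable section

namespace SeatArrangement

variable {P V : Type*}

/-- The utility of agent `p` under arrangement `π`:
the sum, over the seat-graph neighbors `v` of `π p`, of `p`'s preference for the agent seated
at `v`. -/
def utility [Fintype V] (G : SimpleGraph V) (f : P → P → ℝ) (π : P ≃ V) (p : P) : ℝ :=
  ∑ v : V, if G.Adj (π p) v then f p (π.symm v) else 0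

/-- The social welfare of an arrangement: the sum of the utilities of all agents. -/
def sw [Fintype P] [Fintype V] (G : SimpleGraph V) (f : P → P → ℝ) (π : P ≃ V) : ℝ :=
  ∑ p : P, utility G f π p

/-- The `(p,q)`-swap arrangement of `π`. -/
def swapArr (π : P ≃ V) (p q : P) : P ≃ V := (Equiv.swap p q).trans π

/-- `{p, q}` is a blocking pair for `π`: both agents strictly improve by swapping seats. -/
def blocking [Fintype V] (G : SimpleGraph V) (f : P → P → ℝ) (π : P ≃ V) (p q : P) : Prop :=
  p ≠ q ∧ utility G f π p < utility G f (swapArr π p q) p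
        ∧ utility G f π q < utility G f (swapArr π p q) q

/-- An arrangement is stable if it has no blocking pair. -/
def stable [Fintype V] (G : SimpleGraph V) (f : P → P → ℝ) (π : P ≃ V) : Prop :=
  ∀ p q : P, ¬ blocking G f π p q

/-- An arrangement is envy-free if no agent would strictly improve by taking
another agent's seat (via a swap). -/
def envyFree [Fintype V] (G : SimpleGraph V) (f : P → P → ℝ) (π : P ≃ V) : Prop :=
  ∀ p q : P, p ≠ q → utility G f (swapArr π p q) p ≤ utility G f π p

/-- The least utility of an agent under `π` (for a finite nonempty set of agents, the
infimum of the range of utilities is the minimum utility). -/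
def minUtil [Fintype V] (G : SimpleGraph V) (f : P → P → ℝ) (π : P ≃ V) : ℝ :=
  sInf (Set.range (utility G f π))

/-- A maximin arrangement maximizes the least utility of an agent. -/
def maximin [Fintype V] (G : SimpleGraph V) (f : P → P → ℝ) (πf : P ≃ V) : Prop :=
  ∀ π : P ≃ V, minUtil G f π ≤ minUtil G f πf

/-- A maximum arrangement maximizes the social welfare. -/
def maximum [Fintype P] [Fintype V] (G : SimpleGraph V) (f : P → P → ℝ) (πm : P ≃ V) : Prop :=
  ∀ π : P ≃ V, sw G f π ≤ sw G f πm

end SeatArrangement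

open SeatArrangement

/-- The path on three vertices `0 - 1 - 2` (center `1`). -/
def path3 : SimpleGraph (Fin 3) where
  Adj i j := i ≠ j ∧ (i = 1 ∨ j = 1)
  symm := by
    refine ⟨?_⟩
    intro i j h
    exact ⟨h.1.symm, h.2.symm⟩
  loopless := by
    refine ⟨?_⟩
    intro i h
    exact h.1 rfl

/-- The instance with three agents, all pairwise (binary, symmetric)
preferences equal to 1, and seat graph a path on 3 vertices, has no envy-free
arrangement. -/
theorem no_envyFree_path3 (f : Fin 3 → Fin 3 → ℝ)
    (hf : ∀ p q : Fin 3, p ≠ q → f p q = 1) :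
    ∀ π : Fin 3 ≃ Fin 3, ¬ envyFree path3 f π := by
  intro π h
  set p : Fin 3 := π.symm 0 with hp
  set q : Fin 3 := π.symm 1 with hq
  have hpq : p ≠ q := by
    intro he
    have : (0 : Fin 3) = 1 := by
      have := congrArg π he
      simpa [hp, hq] using this
    exact absurd this (by decide)
  have hπp : π p = 0 := by simp [hp]
  have hπq : π q = 1 := by simp [hq]
  set r : Fin 3 := π.symm 2 with hr
  have hrp : r ≠ p := by
    intro he
    have : (2 : Fin 3) = 0 := by
      have := congrArg π he
      simpa [hr, hp] using this
    exact absurd this (by decide)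
  have hrq : r ≠ q := by
    intro he
    have : (2 : Fin 3) = 1 := by
      have := congrArg π he
      simpa [hr, hq] using this
    exact absurd this (by decide)
  have hU1 : utility path3 f π p = 1 := by
    rw [utility, Fin.sum_univ_three, hπp]
    have h0 : ¬ path3.Adj 0 0 := by simp [path3]
    have h1 : path3.Adj 0 1 := ⟨by decide, Or.inr rfl⟩
    have h2 : ¬ path3.Adj (0 : Fin 3) 2 := by simp [path3]
    rw [if_neg h0, if_pos h1, if_neg h2]
    simp [← hq, hf p q hpq]
  have hU2 : utility path3 f (swapArr π p q) p = 2 := by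
    have hsp : (swapArr π p q) p = 1 := by
      simp [swapArr, Equiv.swap_apply_left, hπq]
    have hsymm : ∀ v, (swapArr π p q).symm v = Equiv.swap p q (π.symm v) := by
      intro v
      simp only [swapArr, Equiv.symm_trans_apply, Equiv.symm_swap]
      congr!
    rw [utility, Fin.sum_univ_three, hsp]
    have h0 : path3.Adj 1 0 := ⟨by decide, Or.inl rfl⟩
    have h1 : ¬ path3.Adj (1 : Fin 3) 1 := by simp [path3]
    have h2 : path3.Adj (1 : Fin 3) 2 := ⟨by decide, Or.inl rfl⟩
    rw [if_pos h0, if_neg h1, if_pos h2, hsymm, hsymm]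
    rw [show π.symm 0 = p from rfl, show π.symm 2 = r from rfl]
    rw [Equiv.swap_apply_left, Equiv.swap_apply_of_ne_of_ne hrp hrq]
    rw [hf p q hpq, hf p r (Ne.symm hrp)]
    norm_num
  have := h p q hpq
  rw [hU1, hU2] at this
  norm_num at this
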